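/- For v with Ω_w(v) > ε, the function g(θ) = Ω_w(prox_{θΩ_w}(v)) − ε is continuous and monotonically decreasing on [0, Ω_w*(v)], with g(0) > 0 and g(θ) = −ε < 0 for θ ≥ Ω_w*(v); consequently g has a unique root in (0, Ω_w*(v)). -/

import Mathlib

open Finset

/-- The vector of absolute values of x, sorted in non-increasing order. -/
noncomputable def absSorted {n : ℕ} (x : Fin n → ℝ) : Fin n → ℝ :=
  fun i => |x (Tuple.sort (fun j => -|x j|) i)|

/-- The ordered weighted l1 norm Omega_w(x). -/
noncomputable def owl {n : ℕ} (w x : Fin n → ℝ) : ℝ := ∑ i, w i * absSorted x i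

section aux
variable {n : ℕ} {w : Fin n → ℝ}

lemma owl_eq_perm (x : Fin n → ℝ) :
    owl w x = ∑ i, w i * |x (Tuple.sort (fun j => -|x j|) i)| := rfl

lemma owl_perm_le (hmono : Antitone w) (x : Fin n → ℝ) (σ : Equiv.Perm (Fin n)) :
    ∑ i, w i * |x (σ i)| ≤ owl w x := by
  set τ : Equiv.Perm (Fin n) := Tuple.sort (fun j => -|x j|) with hτ
  have hmonot : Monotone ((fun j => -|x j|) ∘ τ) := Tuple.monotone_sort _
  have hganti : Antitone (fun i => |x (τ i)|) := by
    intro i j hij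
    have := hmonot hij
    simpa using this
  have hmv : Monovary w (fun i => |x (τ i)|) := by
    intro i j hij
    rcases le_or_gt j i with h | h
    · exact hmono h
    · exact absurd (hganti h.le) (not_le.2 hij)
  have key := hmv.sum_smul_comp_perm_le_sum_smul (σ := τ⁻¹ * σ)
  simp only [smul_eq_mul] at key
  calc ∑ i, w i * |x (σ i)| = ∑ i, w i * |x (τ ((τ⁻¹ * σ) i))| := by
        apply Finset.sum_congr rfl; intro i _; simp
    _ ≤ ∑ i, w i * |x (τ i)| := key
    _ = owl w x := (owl_eq_perm x).symm

lemma owl_nonneg (hnn : ∀ i, 0 ≤ w i) (x : Fin n → ℝ) : 0 ≤ owl w x :=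
  Finset.sum_nonneg fun i _ => mul_nonneg (hnn i) (abs_nonneg _)

lemma owl_add_le (hmono : Antitone w) (hnn : ∀ i, 0 ≤ w i) (x y : Fin n → ℝ) :
    owl w (fun i => x i + y i) ≤ owl w x + owl w y := by
  set z : Fin n → ℝ := fun i => x i + y i with hz
  set τ : Equiv.Perm (Fin n) := Tuple.sort (fun j => -|z j|) with hτ
  calc owl w z = ∑ i, w i * |z (τ i)| := owl_eq_perm z
    _ ≤ ∑ i, (w i * |x (τ i)| + w i * |y (τ i)|) := by
        apply Finset.sum_le_sum; intro i _
        rw [← mul_add]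
        exact mul_le_mul_of_nonneg_left (abs_add_le _ _) (hnn i)
    _ = (∑ i, w i * |x (τ i)|) + ∑ i, w i * |y (τ i)| := Finset.sum_add_distrib
    _ ≤ owl w x + owl w y := add_le_add (owl_perm_le hmono x τ) (owl_perm_le hmono y τ)

lemma owl_smul (hmono : Antitone w) (x : Fin n → ℝ) {c : ℝ} (hc : 0 ≤ c) :
    owl w (fun i => c * x i) = c * owl w x := by
  set z : Fin n → ℝ := fun i => c * x i with hz
  apply le_antisymm
  · set τ : Equiv.Perm (Fin n) := Tuple.sort (fun j => -|z j|) with hτ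
    calc owl w z = ∑ i, w i * |z (τ i)| := owl_eq_perm z
      _ = c * ∑ i, w i * |x (τ i)| := by
          rw [Finset.mul_sum]; apply Finset.sum_congr rfl; intro i _
          simp [hz, abs_mul, abs_of_nonneg hc]; ring
      _ ≤ c * owl w x := mul_le_mul_of_nonneg_left (owl_perm_le hmono x τ) hc
  · set τ : Equiv.Perm (Fin n) := Tuple.sort (fun j => -|x j|) with hτ
    calc c * owl w x = ∑ i, w i * |z (τ i)| := by
          rw [owl_eq_perm x, Finset.mul_sum]; apply Finset.sum_congr rfl; intro i _
          simp [hz, abs_mul, abs_of_nonneg hc]; ring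
      _ ≤ owl w z := owl_perm_le hmono z τ

lemma owl_zero : owl w (fun _ => (0:ℝ)) = 0 := by
  simp [owl, absSorted]

lemma owl_neg (x : Fin n → ℝ) : owl w (fun i => -x i) = owl w x := by
  simp [owl, absSorted]

lemma quad_sign (A B : ℝ) (hB : 0 ≤ B)
    (h : ∀ s : ℝ, -1 ≤ s → s ≤ 1 → 0 ≤ s * A + s ^ 2 * B) : A = 0 := by
  by_contra hA
  rcases lt_or_gt_of_ne hA with hA | hA
  · -- A < 0 : use small positive s
    set s : ℝ := min (1/2) (-A / (2*B + 2)) with hs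
    have hs0 : 0 < s := lt_min (by norm_num) (div_pos (by linarith) (by linarith))
    have hs1 : s ≤ 1/2 := min_le_left _ _
    have hs2 : s * (2*B + 2) ≤ -A := by
      have := min_le_right (1/2) (-A / (2*B + 2))
      calc s * (2*B+2) ≤ (-A / (2*B+2)) * (2*B+2) :=
            mul_le_mul_of_nonneg_right this (by linarith)
        _ = -A := by field_simp
    have hk := h s (by linarith) (by linarith)
    nlinarith [mul_le_mul_of_nonneg_left hs2 hs0.le, mul_pos hs0 hs0]
  · -- A > 0 : use small negative s
    set t : ℝ := min (1/2) (A / (2*B + 2)) with ht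
    have ht0 : 0 < t := lt_min (by norm_num) (div_pos (by linarith) (by linarith))
    have ht1 : t ≤ 1/2 := min_le_left _ _
    have ht2 : t * (2*B + 2) ≤ A := by
      have := min_le_right (1/2) (A / (2*B + 2))
      calc t * (2*B+2) ≤ (A / (2*B+2)) * (2*B+2) :=
            mul_le_mul_of_nonneg_right this (by linarith)
        _ = A := by field_simp
    have hk := h (-t) (by linarith) (by linarith)
    nlinarith [mul_le_mul_of_nonneg_left ht2 ht0.le, mul_pos ht0 ht0]

end aux

set_option maxHeartbeats 2000000 in
/-- For Omega_w(v) > ε, the function g(θ) = Omega_w(prox_{θΩ_w}(v)) − ε is continuous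
and decreasing on [0, Omega_w*(v)], with g(0) > 0 and g(θ) = −ε for θ ≥ Omega_w*(v);
hence g has a unique root in (0, Omega_w*(v)). Here P θ denotes prox_{θΩ_w}(v) and D
denotes the dual norm Omega_w*(v). -/
theorem owl_proj_root_finding {n : ℕ} (w : Fin n → ℝ) (hmono : Antitone w)
    (hnonneg : ∀ i, 0 ≤ w i) (hne : w ≠ 0) (ε : ℝ) (hε : 0 < ε)
    (v : Fin n → ℝ) (hv : owl w v > ε)
    (P : ℝ → Fin n → ℝ)
    (hP : ∀ θ : ℝ, 0 ≤ θ → ∀ x : Fin n → ℝ,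
      (1 / 2) * ∑ i, (P θ i - v i) ^ 2 + θ * owl w (P θ) ≤
        (1 / 2) * ∑ i, (x i - v i) ^ 2 + θ * owl w x)
    (D : ℝ)
    (hD : D = sSup {y : ℝ | ∃ u : Fin n → ℝ, owl w u ≤ 1 ∧ y = ∑ i, u i * v i})
    (g : ℝ → ℝ) (hg : g = fun θ => owl w (P θ) - ε) :
    ContinuousOn g (Set.Icc 0 D) ∧ AntitoneOn g (Set.Icc 0 D) ∧
      0 < g 0 ∧ (∀ θ : ℝ, D ≤ θ → g θ = -ε) ∧
      ∃! θ : ℝ, θ ∈ Set.Ioo 0 D ∧ g θ = 0 := by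
  have hΩv : 0 < owl w v := lt_trans hε hv
  have hgap : ∀ θ : ℝ, g θ = owl w (P θ) - ε := by intro θ; rw [hg]
  -- n > 0 and positive top weight
  have hn : 0 < n := by
    rcases Nat.eq_zero_or_pos n with h | h
    · subst h
      rw [owl] at hΩv; simp at hΩv
    · exact h
  set i0 : Fin n := ⟨0, hn⟩ with hi0
  have hw0 : 0 < w i0 := by
    rcases (hnonneg i0).lt_or_eq with h | h
    · exact h
    · exfalso; apply hne; funext i
      have h1 : w i ≤ w i0 := hmono (by simp [hi0, Fin.le_def])
      have := hnonneg i
      simp only [Pi.zero_apply]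
      linarith [h1, h.symm ▸ h1]
  -- max bound
  have hmax : ∀ (x : Fin n → ℝ) (i : Fin n), w i0 * |x i| ≤ owl w x := by
    intro x i
    have key := owl_perm_le hmono x (Equiv.swap i0 i)
    have h1 : w i0 * |x (Equiv.swap i0 i i0)| ≤ ∑ j, w j * |x (Equiv.swap i0 i j)| :=
      Finset.single_le_sum (f := fun j => w j * |x (Equiv.swap i0 i j)|)
        (fun j _ => mul_nonneg (hnonneg j) (abs_nonneg _)) (mem_univ i0)
    rw [Equiv.swap_apply_left] at h1
    linarith
  set S : ℝ := ∑ i, w i with hS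
  have hSpos : 0 < S :=
    lt_of_lt_of_le hw0 (Finset.single_le_sum (fun j _ => hnonneg j) (mem_univ i0))
  -- expansion helper
  have expand : ∀ p : Fin n → ℝ, ∑ i, (p i - v i) ^ 2 =
      (∑ i, p i ^ 2) - 2 * (∑ i, p i * v i) + ∑ i, v i ^ 2 := by
    intro p
    rw [Finset.mul_sum, ← Finset.sum_sub_distrib, ← Finset.sum_add_distrib]
    apply Finset.sum_congr rfl; intros; ring
  -- P 0 = v
  have hP0 : P 0 = v := by
    have h := hP 0 le_rfl v
    have hz : ∑ i, (v i - v i) ^ 2 = (0:ℝ) := Finset.sum_eq_zero (fun i _ => by ring)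
    have h2 : ∑ i, (P 0 i - v i) ^ 2 ≤ 0 := by linarith
    have h3 : ∀ i ∈ Finset.univ, (P 0 i - v i) ^ 2 = 0 := by
      rw [← Finset.sum_eq_zero_iff_of_nonneg (fun i _ => sq_nonneg _)]
      exact le_antisymm h2 (Finset.sum_nonneg fun i _ => sq_nonneg _)
    funext i
    have := h3 i (mem_univ i)
    have := pow_eq_zero_iff (n := 2) (by norm_num) |>.1 this
    linarith
  -- antitonicity of θ ↦ Ω(P θ)
  have h_anti : ∀ θ1 θ2 : ℝ, 0 ≤ θ1 → θ1 ≤ θ2 → owl w (P θ2) ≤ owl w (P θ1) := by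
    intro θ1 θ2 h1 h12
    rcases eq_or_lt_of_le h12 with rfl | hlt
    · exact le_rfl
    · by_contra hc
      push_neg at hc
      have ha := hP θ1 h1 (P θ2)
      have hb := hP θ2 (by linarith) (P θ1)
      nlinarith [mul_pos (sub_pos.2 hlt) (sub_pos.2 hc)]
  have hΩle : ∀ θ : ℝ, 0 ≤ θ → owl w (P θ) ≤ owl w v := by
    intro θ h
    have := h_anti 0 θ le_rfl h
    rwa [hP0] at this
  -- strong convexity inequality
  have h_strong : ∀ θ : ℝ, 0 ≤ θ → ∀ x : Fin n → ℝ,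
      (1/2) * ∑ i, (P θ i - v i) ^ 2 + θ * owl w (P θ) + (1/4) * ∑ i, (x i - P θ i) ^ 2 ≤
        (1/2) * ∑ i, (x i - v i) ^ 2 + θ * owl w x := by
    intro θ hθ x
    set m : Fin n → ℝ := fun i => (x i + P θ i) / 2 with hm
    have hmineq := hP θ hθ m
    have hΩm : owl w m ≤ (owl w x + owl w (P θ)) / 2 := by
      have h1 : owl w m = (1/2) * owl w (fun i => x i + P θ i) := by
        rw [← owl_smul hmono (fun i => x i + P θ i) (by norm_num : (0:ℝ) ≤ 1/2)]
        congr 1; funext i; simp [hm]; ring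
      rw [h1]
      have := owl_add_le hmono hnonneg x (P θ)
      linarith
    have hq : ∑ i, (m i - v i) ^ 2 =
        (1/2) * ∑ i, (x i - v i) ^ 2 + (1/2) * ∑ i, (P θ i - v i) ^ 2
          - (1/4) * ∑ i, (x i - P θ i) ^ 2 := by
      rw [Finset.mul_sum, Finset.mul_sum, Finset.mul_sum, ← Finset.sum_add_distrib,
        ← Finset.sum_sub_distrib]
      apply Finset.sum_congr rfl; intro i _; simp [hm]; ring
    have hθm : θ * owl w m ≤ θ * ((owl w x + owl w (P θ)) / 2) :=
      mul_le_mul_of_nonneg_left hΩm hθ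
    rw [hq] at hmineq
    nlinarith
  -- distance bound
  have h_dist : ∀ θ θ' : ℝ, 0 ≤ θ → 0 ≤ θ' →
      ∑ i, (P θ' i - P θ i) ^ 2 ≤ 4 * owl w v * |θ - θ'| := by
    intro θ θ' hθ hθ'
    have h1 := h_strong θ hθ (P θ')
    have h2 := hP θ' hθ' (P θ)
    have ha1 : 0 ≤ owl w (P θ) := owl_nonneg hnonneg _
    have ha2 : 0 ≤ owl w (P θ') := owl_nonneg hnonneg _
    have hb1 : owl w (P θ) ≤ owl w v := hΩle θ hθ
    have hb2 : owl w (P θ') ≤ owl w v := hΩle θ' hθ'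
    have h3 : (θ - θ') * (owl w (P θ') - owl w (P θ)) ≤ |θ - θ'| * owl w v := by
      calc (θ - θ') * (owl w (P θ') - owl w (P θ))
          ≤ |(θ - θ') * (owl w (P θ') - owl w (P θ))| := le_abs_self _
        _ = |θ - θ'| * |owl w (P θ') - owl w (P θ)| := abs_mul _ _
        _ ≤ |θ - θ'| * owl w v := by
            apply mul_le_mul_of_nonneg_left _ (abs_nonneg _)
            rw [abs_le]; constructor <;> linarith
    nlinarith
  -- |Ωx - Ωy| ≤ Ω(x-y)
  have h_tri : ∀ x y : Fin n → ℝ, |owl w x - owl w y| ≤ owl w (fun i => x i - y i) := by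
    intro x y
    rw [abs_sub_le_iff]
    constructor
    · have h := owl_add_le hmono hnonneg (fun i => x i - y i) y
      have he : (fun i => (x i - y i) + y i) = x := by funext i; ring
      rw [he] at h; linarith
    · have h := owl_add_le hmono hnonneg (fun i => y i - x i) x
      have he : (fun i => (y i - x i) + x i) = y := by funext i; ring
      have hn2 : owl w (fun i => y i - x i) = owl w (fun i => x i - y i) := by
        rw [← owl_neg (fun i => y i - x i)]
        congr 1; funext i; ring
      rw [he, hn2] at h; linarith
  -- Ω z ≤ S √(∑ z²)
  have h_sqrt : ∀ z : Fin n → ℝ, owl w z ≤ S * Real.sqrt (∑ i, z i ^ 2) := by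
    intro z
    have hQ : 0 ≤ ∑ i, z i ^ 2 := Finset.sum_nonneg fun i _ => sq_nonneg _
    rw [owl_eq_perm z]
    calc ∑ i, w i * |z (Tuple.sort (fun j => -|z j|) i)|
        ≤ ∑ i, w i * Real.sqrt (∑ j, z j ^ 2) := by
          apply Finset.sum_le_sum; intro i _
          apply mul_le_mul_of_nonneg_left _ (hnonneg i)
          rw [Real.le_sqrt (abs_nonneg _) hQ]
          calc |z (Tuple.sort (fun j => -|z j|) i)| ^ 2
              = z (Tuple.sort (fun j => -|z j|) i) ^ 2 := sq_abs _
            _ ≤ ∑ j, z j ^ 2 :=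
                Finset.single_le_sum (fun j _ => sq_nonneg (z j)) (mem_univ _)
      _ = S * Real.sqrt (∑ j, z j ^ 2) := by rw [hS, Finset.sum_mul]
  -- modulus of continuity for g
  have hgmod : ∀ θ θ' : ℝ, 0 ≤ θ → 0 ≤ θ' →
      |g θ - g θ'| ≤ S * Real.sqrt (4 * owl w v * |θ - θ'|) := by
    intro θ θ' hθ hθ'
    have h1 : g θ - g θ' = owl w (P θ) - owl w (P θ') := by
      rw [hgap θ, hgap θ']; ring
    rw [h1]
    calc |owl w (P θ) - owl w (P θ')| ≤ owl w (fun i => P θ i - P θ' i) := h_tri _ _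
      _ ≤ S * Real.sqrt (∑ i, (P θ i - P θ' i) ^ 2) := h_sqrt _
      _ ≤ S * Real.sqrt (4 * owl w v * |θ - θ'|) := by
          apply mul_le_mul_of_nonneg_left _ hSpos.le
          apply Real.sqrt_le_sqrt
          have := h_dist θ' θ hθ' hθ
          have he : ∑ i, (P θ i - P θ' i) ^ 2 = ∑ i, (P θ i - P θ' i) ^ 2 := rfl
          have habs : |θ' - θ| = |θ - θ'| := abs_sub_comm _ _
          rw [habs] at this
          exact this
  -- continuity
  have hcont : ContinuousOn g (Set.Icc 0 D) := by
    rw [Metric.continuousOn_iff]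
    intro b hb ε' hε'
    refine ⟨ε' ^ 2 / (2 * S ^ 2 * (4 * owl w v)), by positivity, ?_⟩
    intro a ha hab
    rw [Real.dist_eq] at hab ⊢
    have hmod := hgmod a b ha.1 hb.1
    have hXnn : 0 ≤ 4 * owl w v * |a - b| := by positivity
    have hsq : (S * Real.sqrt (4 * owl w v * |a - b|)) ^ 2 < ε' ^ 2 := by
      rw [mul_pow, Real.sq_sqrt hXnn]
      have : 4 * owl w v * |a - b| < 4 * owl w v * (ε' ^ 2 / (2 * S ^ 2 * (4 * owl w v))) :=
        by apply mul_lt_mul_of_pos_left hab (by positivity)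
      have heq : S ^ 2 * (4 * owl w v * (ε' ^ 2 / (2 * S ^ 2 * (4 * owl w v)))) = ε' ^ 2 / 2 := by
        field_simp
      have h2 := mul_lt_mul_of_pos_left this (by positivity : (0:ℝ) < S ^ 2)
      rw [heq] at h2
      have h3 : 0 < ε' ^ 2 := by positivity
      linarith
    have hlt : S * Real.sqrt (4 * owl w v * |a - b|) < ε' :=
      lt_of_pow_lt_pow_left₀ 2 hε'.le hsq
    calc |g a - g b| ≤ S * Real.sqrt (4 * owl w v * |a - b|) := hmod
      _ < ε' := hlt
  -- antitone
  have hanti : AntitoneOn g (Set.Icc 0 D) := by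
    intro θ1 h1 θ2 h2 h12
    rw [hgap θ1, hgap θ2]
    have := h_anti θ1 θ2 h1.1 h12
    linarith
  -- g 0 > 0
  have hg0 : 0 < g 0 := by rw [hgap 0, hP0]; linarith
  -- dual norm facts
  have hbdd : BddAbove {y : ℝ | ∃ u : Fin n → ℝ, owl w u ≤ 1 ∧ y = ∑ i, u i * v i} := by
    refine ⟨(w i0)⁻¹ * ∑ i, |v i|, ?_⟩
    rintro y ⟨u, hu1, rfl⟩
    rw [Finset.mul_sum]
    apply Finset.sum_le_sum
    intro i _
    have hui : |u i| ≤ (w i0)⁻¹ := by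
      rw [← one_div, le_div_iff₀ hw0]
      nlinarith [hmax u i]
    calc u i * v i ≤ |u i * v i| := le_abs_self _
      _ = |u i| * |v i| := abs_mul _ _
      _ ≤ (w i0)⁻¹ * |v i| := mul_le_mul_of_nonneg_right hui (abs_nonneg _)
  have hmemD : ∀ u : Fin n → ℝ, owl w u ≤ 1 → ∑ i, u i * v i ≤ D := by
    intro u hu
    rw [hD]
    exact le_csSup hbdd ⟨u, hu, rfl⟩
  have hdual : ∀ x : Fin n → ℝ, ∑ i, x i * v i ≤ D * owl w x := by
    intro x
    rcases (owl_nonneg hnonneg x).eq_or_lt with h0 | hpos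
    · have hx0 : ∀ i, x i = 0 := by
        intro i
        have := hmax x i
        rw [← h0] at this
        have habs : |x i| ≤ 0 := by
          by_contra hc
          push_neg at hc
          nlinarith
        have := abs_nonneg (x i)
        have : |x i| = 0 := le_antisymm habs (abs_nonneg _)
        exact abs_eq_zero.1 this
      rw [← h0]
      simp only [mul_zero]
      apply le_of_eq
      apply Finset.sum_eq_zero
      intro i _; rw [hx0 i]; ring
    · set c := owl w x with hc
      have hcne : c ≠ 0 := ne_of_gt hpos
      have hΩu : owl w (fun i => c⁻¹ * x i) = 1 := by
        rw [owl_smul hmono x (inv_nonneg.2 hpos.le)]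
        field_simp
        exact hc.symm
      have hmem := hmemD (fun i => c⁻¹ * x i) (le_of_eq hΩu)
      have heq : ∑ i, x i * v i = c * ∑ i, c⁻¹ * x i * v i := by
        rw [Finset.mul_sum]
        apply Finset.sum_congr rfl; intro i _; field_simp
      rw [heq]
      calc c * ∑ i, c⁻¹ * x i * v i ≤ c * D := mul_le_mul_of_nonneg_left hmem hpos.le
        _ = D * c := mul_comm _ _
  have hDpos : 0 < D := by
    have hv0 : ∃ i, v i ≠ 0 := by
      by_contra hc
      push_neg at hc
      have : v = fun _ => (0:ℝ) := funext hc
      rw [this, owl_zero] at hΩv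
      linarith
    obtain ⟨i, hi⟩ := hv0
    have hΩu : owl w (fun j => (owl w v)⁻¹ * v j) = 1 := by
      rw [owl_smul hmono v (inv_nonneg.2 hΩv.le)]
      field_simp
    have hmem := hmemD _ (le_of_eq hΩu)
    have hsum : 0 < ∑ j, (owl w v)⁻¹ * v j * v j := by
      apply Finset.sum_pos'
      · intro j _
        have he : (owl w v)⁻¹ * v j * v j = (owl w v)⁻¹ * v j ^ 2 := by ring
        rw [he]; positivity
      · refine ⟨i, mem_univ i, ?_⟩
        have he : (owl w v)⁻¹ * v i * v i = (owl w v)⁻¹ * v i ^ 2 := by ring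
        rw [he]; positivity
    linarith
  -- g θ = -ε for θ ≥ D
  have hgD : ∀ θ : ℝ, D ≤ θ → g θ = -ε := by
    intro θ hθ
    have hθ0 : 0 ≤ θ := le_trans hDpos.le hθ
    have h0 := hP θ hθ0 (fun _ => 0)
    rw [owl_zero, mul_zero, add_zero] at h0
    have hz : ∑ i, ((fun _ => (0:ℝ)) i - v i) ^ 2 = ∑ i, v i ^ 2 := by
      apply Finset.sum_congr rfl; intros; ring
    rw [hz, expand (P θ)] at h0
    set A := ∑ i, P θ i ^ 2 with hA
    set B := ∑ i, P θ i * v i with hB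
    have hBa : B ≤ θ * owl w (P θ) := by
      calc B ≤ D * owl w (P θ) := hdual (P θ)
        _ ≤ θ * owl w (P θ) := mul_le_mul_of_nonneg_right hθ (owl_nonneg hnonneg _)
    have hAnn : 0 ≤ A := Finset.sum_nonneg fun i _ => sq_nonneg _
    have hA0 : A = 0 := by linarith
    have hPz : ∀ i, P θ i = 0 := by
      intro i
      have h1 : ∀ j ∈ Finset.univ, P θ j ^ 2 = 0 := by
        rw [← Finset.sum_eq_zero_iff_of_nonneg (fun j _ => sq_nonneg _)]
        exact hA0
      have := h1 i (mem_univ i)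
      exact pow_eq_zero_iff (n := 2) (by norm_num) |>.1 this
    have hB0 : B = 0 := by
      rw [hB]; apply Finset.sum_eq_zero; intro i _; rw [hPz i]; ring
    have hΩp0 : owl w (P θ) = 0 := by
      have h2 : θ * owl w (P θ) ≤ 0 := by linarith
      have h3 : 0 ≤ owl w (P θ) := owl_nonneg hnonneg _
      have hθpos : 0 < θ := lt_of_lt_of_le hDpos hθ
      have h4 : owl w (P θ) ≤ 0 := by
        by_contra hc
        push_neg at hc
        nlinarith [mul_pos hθpos hc]
      linarith
    rw [hgap θ, hΩp0]; ring
  -- stationarity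
  have h_stat : ∀ θ : ℝ, 0 ≤ θ → ∀ p : Fin n → ℝ,
      (∀ x : Fin n → ℝ, (1/2) * ∑ i, (p i - v i) ^ 2 + θ * owl w p ≤
        (1/2) * ∑ i, (x i - v i) ^ 2 + θ * owl w x) →
      (∑ i, p i * (p i - v i)) + θ * owl w p = 0 := by
    intro θ hθ p hmin
    apply quad_sign _ ((1/2) * ∑ i, p i ^ 2)
      (by positivity)
    intro s hs1 hs2
    have hmin' := hmin (fun i => (1 + s) * p i)
    have hΩs : owl w (fun i => (1 + s) * p i) = (1 + s) * owl w p :=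
      owl_smul hmono p (by linarith)
    have he : ∑ i, ((1 + s) * p i - v i) ^ 2 =
        (∑ i, (p i - v i) ^ 2) + 2 * s * (∑ i, p i * (p i - v i)) + s ^ 2 * ∑ i, p i ^ 2 := by
      rw [Finset.mul_sum, Finset.mul_sum, ← Finset.sum_add_distrib, ← Finset.sum_add_distrib]
      apply Finset.sum_congr rfl; intros; ring
    rw [hΩs, he] at hmin'
    nlinarith
  -- no two roots
  have key_lt : ∀ t1 t2 : ℝ, t1 ∈ Set.Ioo 0 D → t2 ∈ Set.Ioo 0 D →
      g t1 = 0 → g t2 = 0 → ¬ t1 < t2 := by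
    intro t1 t2 h1 h2 hr1 hr2 hlt
    rw [hgap t1] at hr1
    rw [hgap t2] at hr2
    rw [sub_eq_zero] at hr1 hr2
    have ha := hP t1 h1.1.le (P t2)
    have hb := hP t2 h2.1.le (P t1)
    have hq12 : ∑ i, (P t1 i - v i) ^ 2 = ∑ i, (P t2 i - v i) ^ 2 := by
      rw [hr1, hr2] at ha hb
      linarith
    have hmin2 : ∀ x : Fin n → ℝ, (1/2) * ∑ i, (P t1 i - v i) ^ 2 + t2 * owl w (P t1) ≤
        (1/2) * ∑ i, (x i - v i) ^ 2 + t2 * owl w x := by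
      intro x
      calc (1/2) * ∑ i, (P t1 i - v i) ^ 2 + t2 * owl w (P t1)
          = (1/2) * ∑ i, (P t2 i - v i) ^ 2 + t2 * owl w (P t2) := by
            rw [hq12, hr1, hr2]
        _ ≤ (1/2) * ∑ i, (x i - v i) ^ 2 + t2 * owl w x := hP t2 h2.1.le x
    have st1 := h_stat t1 h1.1.le (P t1) (hP t1 h1.1.le)
    have st2 := h_stat t2 h2.1.le (P t1) hmin2
    have heqt : t1 * owl w (P t1) = t2 * owl w (P t1) := by linarith
    rw [hr1] at heqt
    nlinarith [mul_pos (sub_pos.2 hlt) hε]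
  -- existence of root
  have hroot : ∃ θ ∈ Set.Ioo 0 D, g θ = 0 := by
    have hsub := intermediate_value_Ioo' hDpos.le hcont
    have hmem : (0:ℝ) ∈ Set.Ioo (g D) (g 0) := by
      constructor
      · rw [hgD D le_rfl]; linarith
      · exact hg0
    obtain ⟨θ, hθmem, hθeq⟩ := hsub hmem
    exact ⟨θ, hθmem, hθeq⟩
  obtain ⟨θ, hθmem, hθeq⟩ := hroot
  refine ⟨hcont, hanti, hg0, hgD, θ, ⟨hθmem, hθeq⟩, ?_⟩
  rintro θ' ⟨hm', he'⟩
  by_contra hne'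
  rcases lt_or_gt_of_ne hne' with h | h
  · exact key_lt θ' θ hm' hθmem he' hθeq h
  · exact key_lt θ θ' hθmem hm' hθeq he' h
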